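/- arXiv:1407.7279 — 3 statements merged into one kernel-verified Lean document; each statement's English description precedes it below -/
import Mathlib

section
/- Let 𝒢 be a TVG with vertex set V of size n, let s ∈ V, and suppose some journey starting at s at time 0 visits every vertex within the lifetime. For vertices u,v and time t, let d^t_{uv} ∈ ℕ ∪ {∞} be the least δ such that some journey departs from u at or after time t and arrives at v at time t + δ, with d^t_{uu} = 0. Then the minimal arrival time of a covering journey from s at time 0 equals the minimum, over all orderings u_1, u_2, …, u_n of V with u_1 = s, of a_n, where a_1 = 0 and a_{i+1} = a_i + d^{a_i}_{u_i u_{i+1}} for 1 ≤ i < n. -/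
/-- A time-varying graph (TVG): an underlying simple graph together with a presence
function telling when each (directed rendering of an) edge is available; every edge
takes one time step to cross. -/
structure TVG (V : Type) where
  G : SimpleGraph V
  avail : V → V → ℕ → Prop

namespace TVG

variable {V : Type}

/-- A step of a journey: traverse the edge from `x.1` to `x.2.1`, starting at time
`x.2.2` and arriving at time `x.2.2 + 1`. -/
abbrev Step (V : Type) := V × V × ℕ

/-- Consecutive steps of a journey: the next step starts where the previous one ended,
at a strictly later time (waiting in between is allowed). -/
def Linked (a b : Step V) : Prop := b.1 = a.2.1 ∧ a.2.2 + 1 ≤ b.2.2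

/-- A journey: each step crosses an edge of the underlying graph that is available at
that time, and consecutive steps are linked. -/
def IsJourney (𝒢 : TVG V) (J : List (Step V)) : Prop :=
  (∀ x ∈ J, 𝒢.G.Adj x.1 x.2.1 ∧ 𝒢.avail x.1 x.2.1 x.2.2) ∧ J.Chain' Linked

/-- The journey starts at vertex `u`. -/
def startsAt (J : List (Step V)) (u : V) : Prop := ∀ x ∈ J.head?, x.1 = u

/-- The journey departs at or after time `t`. -/
def departsAfter (J : List (Step V)) (t : ℕ) : Prop := ∀ x ∈ J.head?, t ≤ x.2.2

/-- Departure date of a journey started at time `t0`. -/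
def departure (J : List (Step V)) (t0 : ℕ) : ℕ := (J.head?).elim t0 fun x => x.2.2

/-- Arrival date of a journey started at time `t0`. -/
def arrival (J : List (Step V)) (t0 : ℕ) : ℕ := (J.getLast?).elim t0 fun x => x.2.2 + 1

/-- Final vertex of a journey started at vertex `s`. -/
def endAt (J : List (Step V)) (s : V) : V := (J.getLast?).elim s fun x => x.2.1

/-- The journey, started at `s`, visits (covers) vertex `v`. -/
def visits (J : List (Step V)) (s v : V) : Prop := v = s ∨ ∃ x ∈ J, x.2.1 = v

/-- A covering journey from `s` starting at time `0`: a journey that starts at `s`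
and visits every vertex. -/
def IsCoveringFrom (𝒢 : TVG V) (J : List (Step V)) (s : V) : Prop :=
  𝒢.IsJourney J ∧ startsAt J s ∧ ∀ v : V, visits J s v

/-- Class `R` (recurrent edges): connected underlying graph, lifetime `ℕ`, and every
edge is available at arbitrarily late times. -/
def ClassR (𝒢 : TVG V) : Prop :=
  𝒢.G.Connected ∧ ∀ u v, 𝒢.G.Adj u v → ∀ t, ∃ t', t < t' ∧ 𝒢.avail u v t'

/-- Class `B` (time-bounded recurrent edges): every edge is available at some time in
`[t, t + Δ)` for every `t`. -/
def ClassB (𝒢 : TVG V) (Δ : ℕ) : Prop :=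
  𝒢.G.Connected ∧ ∀ u v, 𝒢.G.Adj u v → ∀ t, ∃ t', t ≤ t' ∧ t' < t + Δ ∧ 𝒢.avail u v t'

/-- Class `P` (periodic edges): the presence function is periodic with period `p`. -/
def ClassP (𝒢 : TVG V) (p : ℕ) : Prop :=
  𝒢.G.Connected ∧ ∀ u v t, 𝒢.avail u v t ↔ 𝒢.avail u v (t + p)

/-- Presence function obtained by running the given (possibly time-dependent) edge
relations for the given durations, one block after another, starting at time `0`;
each block relation receives the local time within its block. -/
def schedAvail : List ((V → V → ℕ → Prop) × ℕ) → V → V → ℕ → Prop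
  | [], _, _, _ => False
  | (r, d) :: rest, u, v, t => if t < d then r u v t else schedAvail rest u v (t - d)

end TVG

open TVG

section Helpers
variable {V : Type} (𝒢 : TVG V)

lemma getLast?_eq (J : List (Step V)) (h : J ≠ []) : ∃ y, J.getLast? = some y :=
  ⟨J.getLast h, List.getLast?_eq_getLast h⟩

lemma head?_eq (J : List (Step V)) (h : J ≠ []) : ∃ y, J.head? = some y := by
  cases J with
  | nil => exact absurd rfl h
  | cons a l => exact ⟨a, rfl⟩

lemma arrival_cons (x : Step V) (J : List (Step V)) (t : ℕ) :
    arrival (x :: J) t = arrival J (x.2.2 + 1) := by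
  cases J with
  | nil => rfl
  | cons a l =>
    obtain ⟨y, hy⟩ := getLast?_eq (a :: l) (by simp)
    simp [arrival, List.getLast?_cons_cons, hy]

lemma arrival_indep {J : List (Step V)} (h : J ≠ []) (t t' : ℕ) :
    arrival J t = arrival J t' := by
  obtain ⟨y, hy⟩ := getLast?_eq J h
  simp [arrival, hy]

lemma arrival_append (J1 J2 : List (Step V)) (t t' : ℕ) (h : J2 ≠ []) :
    arrival (J1 ++ J2) t = arrival J2 t' := by
  obtain ⟨y, hy⟩ := getLast?_eq J2 h
  unfold arrival
  rw [List.getLast?_append, hy]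
  rfl

lemma endAt_append (J1 J2 : List (Step V)) (s s' : V) (h : J2 ≠ []) :
    endAt (J1 ++ J2) s = endAt J2 s' := by
  obtain ⟨y, hy⟩ := getLast?_eq J2 h
  unfold endAt
  rw [List.getLast?_append, hy]
  rfl

lemma isJourney_append {J1 J2 : List (Step V)} (h1 : 𝒢.IsJourney J1) (h2 : 𝒢.IsJourney J2)
    (hlink : ∀ x ∈ J1.getLast?, ∀ y ∈ J2.head?, Linked x y) :
    𝒢.IsJourney (J1 ++ J2) := by
  constructor
  · intro x hx
    rcases List.mem_append.1 hx with h | h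
    exacts [h1.1 x h, h2.1 x h]
  · exact h1.2.append h2.2 hlink

lemma head_le_getLast {J : List (Step V)} (hc : J.Chain' Linked) :
    ∀ x ∈ J.head?, ∀ y ∈ J.getLast?, x.2.2 ≤ y.2.2 := by
  induction J with
  | nil => simp
  | cons a l ih =>
    intro x hx y hy
    simp only [List.head?_cons, Option.mem_def, Option.some.injEq] at hx
    subst hx
    cases l with
    | nil =>
      simp only [List.getLast?_singleton, Option.mem_def, Option.some.injEq] at hy
      subst hy; exact le_refl _
    | cons b m =>
      rw [List.getLast?_cons_cons] at hy
      have h1 : Linked a b ∧ (b :: m).Chain' Linked := List.isChain_cons_cons.1 hc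
      have h2 := ih h1.2 b (by simp) y hy
      have h3 := h1.1.2
      omega

end Helpers

/-- `fore 𝒢 t u v`: the least `δ` such that some journey departs from `u` at or after
time `t` and arrives at `v` at time `t + δ`; `0` when `u = v`, `∞` if none exists. -/
noncomputable def fore {V : Type} (𝒢 : TVG V) (t : ℕ) (u v : V) : ℕ∞ :=
  letI := Classical.propDecidable (u = v)
  if u = v then 0 else
    sInf {x : ℕ∞ | ∃ δ : ℕ, x = (δ : ℕ∞) ∧ ∃ J : List (TVG.Step V), J ≠ [] ∧
      𝒢.IsJourney J ∧ startsAt J u ∧ departsAfter J t ∧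
      endAt J u = v ∧ arrival J t = t + δ}

/-- One step of the dynamic program: from arrival time `a` at `u`, the arrival time
`a + d^a_{uv}` at `v` (propagating `∞`). -/
noncomputable def stepTime {V : Type} (𝒢 : TVG V) (u v : V) (a : ℕ∞) : ℕ∞ :=
  WithTop.recTopCoe ⊤ (fun n => (n : ℕ∞) + fore 𝒢 n u v) a

/-- `chainTime 𝒢 u a l`: the arrival time obtained by starting at `u` at time `a` and
successively taking foremost journeys to the vertices of `l` in order. -/
noncomputable def chainTime {V : Type} (𝒢 : TVG V) : V → ℕ∞ → List V → ℕ∞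
  | _, a, [] => a
  | u, a, v :: rest => chainTime 𝒢 v (stepTime 𝒢 u v a) rest


section ForeLemmas
variable {V : Type} (𝒢 : TVG V)

lemma enat_exists {x : ℕ∞} (h : x ≠ ⊤) : ∃ m : ℕ, (m : ℕ∞) = x := by
  lift x to ℕ using h
  exact ⟨x, rfl⟩

lemma fore_self (t : ℕ) (u : V) : fore 𝒢 t u u = 0 := by
  unfold fore; exact if_pos rfl

lemma fore_le {t δ : ℕ} {u v : V} {J : List (Step V)} (hne : J ≠ [])
    (hJ : 𝒢.IsJourney J) (hs : startsAt J u) (hd : departsAfter J t)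
    (he : endAt J u = v) (ha : arrival J t = t + δ) :
    fore 𝒢 t u v ≤ (δ : ℕ∞) := by
  unfold fore
  split
  · exact zero_le
  · exact sInf_le ⟨δ, rfl, J, hne, hJ, hs, hd, he, ha⟩

lemma exists_of_fore_le {t δ : ℕ} {u v : V} (hne : u ≠ v) (h : fore 𝒢 t u v ≤ (δ : ℕ∞)) :
    ∃ δ' ≤ δ, ∃ J : List (Step V), J ≠ [] ∧ 𝒢.IsJourney J ∧ startsAt J u ∧
      departsAfter J t ∧ endAt J u = v ∧ arrival J t = t + δ' := by
  unfold fore at h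
  rw [if_neg hne] at h
  have hlt := lt_of_le_of_lt h (by exact_mod_cast Nat.lt_succ_self δ :
    (δ : ℕ∞) < ((δ + 1 : ℕ) : ℕ∞))
  obtain ⟨x, hx, hxlt⟩ := sInf_lt_iff.1 hlt
  obtain ⟨δ', rfl, J, h1, h2, h3, h4, h5, h6⟩ := hx
  have : δ' ≤ δ := by exact_mod_cast Nat.lt_succ_iff.1 (by exact_mod_cast hxlt)
  exact ⟨δ', this, J, h1, h2, h3, h4, h5, h6⟩

lemma fore_mono {t t' : ℕ} (h : t ≤ t') (u v : V) :
    (t : ℕ∞) + fore 𝒢 t u v ≤ (t' : ℕ∞) + fore 𝒢 t' u v := by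
  by_cases huv : u = v
  · subst huv
    rw [fore_self, fore_self, add_zero, add_zero]
    exact_mod_cast h
  rcases eq_or_ne (fore 𝒢 t' u v) ⊤ with hf | hf
  · rw [hf]; simp
  obtain ⟨δ', hf⟩ := enat_exists hf
  obtain ⟨δ'', hδ, J, hne, hJ, hs, hd, he, ha⟩ := exists_of_fore_le 𝒢 huv hf.ge
  have hd' : departsAfter J t := fun y hy => le_trans h (hd y hy)
  have hA : arrival J t = t' + δ'' := (arrival_indep hne t t').trans ha
  have hfle : fore 𝒢 t u v ≤ ((t' + δ'' - t : ℕ) : ℕ∞) :=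
    fore_le 𝒢 hne hJ hs hd' he (by omega)
  calc (t : ℕ∞) + fore 𝒢 t u v ≤ (t : ℕ∞) + ((t' + δ'' - t : ℕ) : ℕ∞) :=
        add_le_add_right hfle _
    _ = ((t' + δ'' : ℕ) : ℕ∞) := by rw [← Nat.cast_add]; congr 1; omega
    _ ≤ (t' : ℕ∞) + (δ' : ℕ∞) := by
        rw [Nat.cast_add]; exact add_le_add_right (by exact_mod_cast hδ) _
    _ = _ := by rw [← hf]

lemma fore_triangle {t t₂ : ℕ} (u v w : V) (h₂ : (t : ℕ∞) + fore 𝒢 t u v = (t₂ : ℕ∞)) :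
    (t : ℕ∞) + fore 𝒢 t u w ≤ (t₂ : ℕ∞) + fore 𝒢 t₂ v w := by
  have htt2 : t ≤ t₂ := by
    have := le_self_add.trans h₂.le
    exact_mod_cast this
  by_cases huv : u = v
  · subst huv
    rw [fore_self, add_zero] at h₂
    have : t = t₂ := by exact_mod_cast h₂
    subst this
    exact le_rfl
  by_cases hvw : v = w
  · subst hvw
    rw [fore_self, add_zero, ← h₂]
  rcases eq_or_ne (fore 𝒢 t₂ v w) ⊤ with hf | hf
  · rw [hf]; simp
  obtain ⟨δ₂, hf⟩ := enat_exists hf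
  by_cases huw : u = w
  · subst huw
    rw [fore_self, add_zero]
    exact le_trans (by exact_mod_cast htt2) le_self_add
  -- extract journeys
  have hδ1 : fore 𝒢 t u v ≤ ((t₂ - t : ℕ) : ℕ∞) := by
    have : fore 𝒢 t u v = ((t₂ - t : ℕ) : ℕ∞) := by
      rcases eq_or_ne (fore 𝒢 t u v) ⊤ with h1 | h1
      · rw [h1] at h₂; simp at h₂
      obtain ⟨δ, h1⟩ := enat_exists h1
      rw [← h1, ← Nat.cast_add] at h₂
      have : t + δ = t₂ := by exact_mod_cast h₂
      rw [← h1]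
      exact_mod_cast (show δ = t₂ - t by omega)
    exact this.le
  obtain ⟨δ₁', hδ₁', J1, hne1, hJ1, hs1, hd1, he1, ha1⟩ := exists_of_fore_le 𝒢 huv hδ1
  obtain ⟨δ₂', hδ₂', J2, hne2, hJ2, hs2, hd2, he2, ha2⟩ := exists_of_fore_le 𝒢 hvw hf.ge
  obtain ⟨y1, hy1⟩ := getLast?_eq J1 hne1
  obtain ⟨z2, hz2⟩ := head?_eq J2 hne2
  have ha1' : y1.2.2 + 1 = t + δ₁' := by
    have := ha1; unfold arrival at this; rw [hy1] at this; exact this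
  have hlink : ∀ x ∈ J1.getLast?, ∀ y ∈ J2.head?, Linked x y := by
    intro x hx y hy
    rw [hy1] at hx; rw [hz2] at hy
    simp only [Option.mem_def, Option.some.injEq] at hx hy
    subst hx; subst hy
    constructor
    · have := hs2 z2 (by rw [hz2]; rfl)
      rw [this]
      have := he1; unfold endAt at this; rw [hy1] at this; exact this.symm
    · have h1 : t₂ ≤ z2.2.2 := hd2 z2 (by rw [hz2]; rfl)
      omega
  have hJ : 𝒢.IsJourney (J1 ++ J2) := isJourney_append 𝒢 hJ1 hJ2 hlink
  have hne : J1 ++ J2 ≠ [] := by simp [hne1]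
  have hsJ : startsAt (J1 ++ J2) u := by
    intro x hx
    rw [List.head?_append_of_ne_nil _ hne1] at hx
    exact hs1 x hx
  have hdJ : departsAfter (J1 ++ J2) t := by
    intro x hx
    rw [List.head?_append_of_ne_nil _ hne1] at hx
    exact hd1 x hx
  have heJ : endAt (J1 ++ J2) u = w := by
    rw [endAt_append J1 J2 u v hne2]; exact he2
  have haJ : arrival (J1 ++ J2) t = t₂ + δ₂' := by
    rw [arrival_append J1 J2 t t₂ hne2]; exact ha2
  have hfle : fore 𝒢 t u w ≤ ((t₂ + δ₂' - t : ℕ) : ℕ∞) :=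
    fore_le 𝒢 hne hJ hsJ hdJ heJ (by omega)
  calc (t : ℕ∞) + fore 𝒢 t u w ≤ (t : ℕ∞) + ((t₂ + δ₂' - t : ℕ) : ℕ∞) :=
        add_le_add_right hfle _
    _ = ((t₂ + δ₂' : ℕ) : ℕ∞) := by rw [← Nat.cast_add]; congr 1; omega
    _ ≤ (t₂ : ℕ∞) + (δ₂ : ℕ∞) := by
        rw [Nat.cast_add]; exact add_le_add_right (by exact_mod_cast hδ₂') _
    _ = _ := by rw [← hf]

end ForeLemmas


section ChainLemmas
variable {V : Type} (𝒢 : TVG V)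

lemma stepTime_coe (u v : V) (n : ℕ) :
    stepTime 𝒢 u v (n : ℕ∞) = (n : ℕ∞) + fore 𝒢 n u v := rfl

lemma stepTime_top (u v : V) : stepTime 𝒢 u v ⊤ = ⊤ := rfl

lemma chainTime_cons (u v : V) (a : ℕ∞) (rest : List V) :
    chainTime 𝒢 u a (v :: rest) = chainTime 𝒢 v (stepTime 𝒢 u v a) rest := rfl

lemma chainTime_top (l : List V) : ∀ u : V, chainTime 𝒢 u ⊤ l = ⊤ := by
  induction l with
  | nil => intro u; rfl
  | cons v rest ih =>
    intro u
    rw [chainTime_cons, stepTime_top]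
    exact ih v

lemma le_stepTime (u v : V) (a : ℕ∞) : a ≤ stepTime 𝒢 u v a := by
  induction a using ENat.recTopCoe with
  | top => rw [stepTime_top]
  | coe n => rw [stepTime_coe]; exact le_self_add

lemma stepTime_mono (u v : V) {a a' : ℕ∞} (h : a ≤ a') :
    stepTime 𝒢 u v a ≤ stepTime 𝒢 u v a' := by
  induction a' using ENat.recTopCoe with
  | top => rw [stepTime_top]; exact le_top
  | coe n' =>
    induction a using ENat.recTopCoe with
    | top => exact absurd h (by simp)
    | coe n =>
      rw [stepTime_coe, stepTime_coe]
      exact fore_mono 𝒢 (by exact_mod_cast h) u v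

lemma stepTime_triangle (u v w : V) (a : ℕ∞) :
    stepTime 𝒢 u w a ≤ stepTime 𝒢 v w (stepTime 𝒢 u v a) := by
  induction a using ENat.recTopCoe with
  | top => rw [stepTime_top, stepTime_top, stepTime_top]
  | coe t =>
    rcases eq_or_ne (stepTime 𝒢 u v (t : ℕ∞)) ⊤ with h₂ | h₂
    · rw [h₂, stepTime_top]; exact le_top
    obtain ⟨t₂, h₂'⟩ := enat_exists h₂
    rw [stepTime_coe, ← h₂', stepTime_coe]
    exact fore_triangle 𝒢 u v w (by rw [h₂', stepTime_coe 𝒢 u v t])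

lemma chainTime_mono (l : List V) : ∀ (u : V) {a a' : ℕ∞}, a ≤ a' →
    chainTime 𝒢 u a l ≤ chainTime 𝒢 u a' l := by
  induction l with
  | nil => intro u a a' h; exact h
  | cons v rest ih =>
    intro u a a' h
    rw [chainTime_cons, chainTime_cons]
    exact ih v (stepTime_mono 𝒢 u v h)

lemma le_chainTime (l : List V) : ∀ (u : V) (a : ℕ∞), a ≤ chainTime 𝒢 u a l := by
  induction l with
  | nil => intro u a; exact le_rfl
  | cons v rest ih =>
    intro u a
    rw [chainTime_cons]
    exact (le_stepTime 𝒢 u v a).trans (ih v _)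

lemma chainTime_shift (rest : List V) : ∀ (u v : V) (a : ℕ∞),
    chainTime 𝒢 u a rest ≤ chainTime 𝒢 v (stepTime 𝒢 u v a) rest := by
  induction rest with
  | nil => intro u v a; exact le_stepTime 𝒢 u v a
  | cons w r _ =>
    intro u v a
    rw [chainTime_cons, chainTime_cons]
    exact chainTime_mono 𝒢 r w (stepTime_triangle 𝒢 u v w a)

lemma chainTime_sublist {l' l : List V} (h : List.Sublist l' l) : ∀ (u : V) (a : ℕ∞),
    chainTime 𝒢 u a l' ≤ chainTime 𝒢 u a l := by
  induction h with
  | slnil => intro u a; exact le_rfl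
  | cons v h ih =>
    intro u a
    rw [chainTime_cons]
    exact (ih u a).trans (chainTime_shift 𝒢 _ u v a)
  | cons_cons v h ih =>
    intro u a
    rw [chainTime_cons, chainTime_cons]
    exact ih v _

end ChainLemmas


section MainLemmas
variable {V : Type} (𝒢 : TVG V)

/-- Direction 1: from a chain of foremost travel times, build an actual journey. -/
lemma chain_exists_journey (l : List V) : ∀ (u : V) (a b : ℕ),
    chainTime 𝒢 u (a : ℕ∞) l ≤ (b : ℕ∞) →
    ∃ J, 𝒢.IsJourney J ∧ startsAt J u ∧ departsAfter J a ∧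
      (∀ v ∈ l, visits J u v) ∧ arrival J a ≤ b := by
  induction l with
  | nil =>
    intro u a b h
    refine ⟨[], ⟨by simp, List.isChain_nil⟩, by simp [startsAt], by simp [departsAfter], by simp, ?_⟩
    exact_mod_cast (show (a : ℕ∞) ≤ (b : ℕ∞) from h)
  | cons v rest ih =>
    intro u a b h
    rw [chainTime_cons] at h
    have hst : stepTime 𝒢 u v (a : ℕ∞) ≠ ⊤ := by
      intro htop
      rw [htop, chainTime_top] at h
      exact absurd h (by simp)
    obtain ⟨a', ha'⟩ := enat_exists hst
    rw [← ha'] at h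
    have haa' : a ≤ a' := by
      have h2 := le_stepTime 𝒢 u v (a : ℕ∞)
      rw [← ha'] at h2
      exact_mod_cast h2
    by_cases huv : u = v
    · subst huv
      have ha'a : a' = a := by
        have : stepTime 𝒢 u u (a : ℕ∞) = (a : ℕ∞) := by
          rw [stepTime_coe, fore_self, add_zero]
        rw [this] at ha'
        exact_mod_cast ha'
      subst ha'a
      obtain ⟨J, hJ, hs, hd, hvis, har⟩ := ih u a' b h
      refine ⟨J, hJ, hs, hd, ?_, har⟩
      intro w hw
      rcases List.mem_cons.1 hw with rfl | hw2
      · exact Or.inl rfl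
      · exact hvis w hw2
    · have hfore : fore 𝒢 a u v ≤ ((a' - a : ℕ) : ℕ∞) := by
        have heq : (a : ℕ∞) + fore 𝒢 a u v = (a' : ℕ∞) := by
          rw [← stepTime_coe]; exact ha'.symm ▸ rfl
        rcases eq_or_ne (fore 𝒢 a u v) ⊤ with hf | hf
        · rw [hf] at heq; simp at heq
        obtain ⟨δ, hδ⟩ := enat_exists hf
        rw [← hδ, ← Nat.cast_add] at heq
        have : a + δ = a' := by exact_mod_cast heq
        rw [← hδ]
        exact_mod_cast (show δ ≤ a' - a by omega)
      obtain ⟨δ', hδ', J1, hne1, hJ1, hs1, hd1, he1, ha1⟩ :=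
        exists_of_fore_le 𝒢 huv hfore
      obtain ⟨J2, hJ2, hs2, hd2, hvis2, har2⟩ := ih v a' b h
      obtain ⟨y1, hy1⟩ := getLast?_eq J1 hne1
      have hy1end : y1.2.1 = v := by
        have := he1; unfold endAt at this; rw [hy1] at this; exact this
      have hy1ar : y1.2.2 + 1 = a + δ' := by
        have := ha1; unfold arrival at this; rw [hy1] at this; exact this
      have hlink : ∀ x ∈ J1.getLast?, ∀ y ∈ J2.head?, Linked x y := by
        intro x hx y hy
        rw [hy1] at hx
        simp only [Option.mem_def, Option.some.injEq] at hx
        subst hx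
        refine ⟨(hs2 y hy).trans hy1end.symm, ?_⟩
        have := hd2 y hy
        omega
      refine ⟨J1 ++ J2, isJourney_append 𝒢 hJ1 hJ2 hlink, ?_, ?_, ?_, ?_⟩
      · intro x hx
        rw [List.head?_append_of_ne_nil _ hne1] at hx
        exact hs1 x hx
      · intro x hx
        rw [List.head?_append_of_ne_nil _ hne1] at hx
        exact hd1 x hx
      · intro w hw
        rcases List.mem_cons.1 hw with rfl | hw2
        ·
          exact Or.inr ⟨y1, List.mem_append_left _ (List.mem_of_mem_getLast? hy1), hy1end⟩
        · rcases hvis2 w hw2 with hw3 | ⟨y, hy, hyw⟩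
          · subst hw3
            exact Or.inr ⟨y1, List.mem_append_left _ (List.mem_of_mem_getLast? hy1), hy1end⟩
          · exact Or.inr ⟨y, List.mem_append_right _ hy, hyw⟩
      · rcases eq_or_ne J2 [] with h2 | h2
        · rw [h2, List.append_nil]
          have hb : a' ≤ b := by rw [h2] at har2; exact har2
          calc arrival J1 a = a + δ' := ha1
            _ ≤ a' := by omega
            _ ≤ b := hb
        · rw [arrival_append J1 J2 a a' h2]
          exact har2

/-- Direction 2: from a journey, extract the first-visit ordering. -/
lemma journey_exists_chain (J : List (Step V)) : ∀ (u : V) (t : ℕ),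
    𝒢.IsJourney J → startsAt J u → departsAfter J t →
    ∃ l : List V, (u :: l).Nodup ∧ (∀ v, visits J u v → v ∈ u :: l) ∧
      (∀ v ∈ l, visits J u v) ∧ chainTime 𝒢 u (t : ℕ∞) l ≤ (arrival J t : ℕ∞) := by
  classical
  induction J with
  | nil =>
    intro u t _ _ _
    refine ⟨[], by simp, ?_, by simp, le_rfl⟩
    intro v hv
    rcases hv with rfl | ⟨x, hx, _⟩
    · simp
    · simp at hx
  | cons x J' ih =>
    intro u t hJ hs hd
    have hxu : x.1 = u := hs x rfl
    have htx : t ≤ x.2.2 := hd x rfl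
    set u' := x.2.1 with hu'
    set t' := x.2.2 + 1 with ht'
    have hcc := List.isChain_cons.1 hJ.2
    have hJ' : 𝒢.IsJourney J' := ⟨fun y hy => hJ.1 y (List.mem_cons_of_mem x hy), hcc.2⟩
    have hs' : startsAt J' u' := fun y hy => (hcc.1 y hy).1
    have hd' : departsAfter J' t' := fun y hy => (hcc.1 y hy).2
    obtain ⟨l', hnd, hfwd, hbwd, hct⟩ := ih u' t' hJ' hs' hd'
    have harr : arrival (x :: J') t = arrival J' t' := arrival_cons x J' t
    have hstep : stepTime 𝒢 u u' (t : ℕ∞) ≤ (t' : ℕ∞) := by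
      rw [stepTime_coe]
      have hfle : fore 𝒢 t u u' ≤ ((t' - t : ℕ) : ℕ∞) := by
        refine fore_le 𝒢 (J := [x]) (by simp) ⟨fun y hy => ?_, List.isChain_singleton x⟩
          (fun y hy => ?_) (fun y hy => ?_) ?_ ?_
        · rw [List.mem_singleton.1 hy]; exact hJ.1 x (by simp)
        · simp only [List.head?_cons, Option.mem_def, Option.some.injEq] at hy
          rw [← hy]; exact hxu
        · simp only [List.head?_cons, Option.mem_def, Option.some.injEq] at hy
          rw [← hy]; exact htx
        · rfl
        · show x.2.2 + 1 = t + (t' - t); omega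
      calc (t : ℕ∞) + fore 𝒢 t u u' ≤ (t : ℕ∞) + ((t' - t : ℕ) : ℕ∞) :=
            add_le_add_right hfle _
        _ = (t' : ℕ∞) := by rw [← Nat.cast_add]; congr 1; omega
    by_cases h : u' = u
    · refine ⟨l', h ▸ hnd, ?_, ?_, ?_⟩
      · intro v hv
        rcases hv with rfl | ⟨y, hy, hyv⟩
        · exact List.mem_cons_self
        · rcases List.mem_cons.1 hy with rfl | hy2
          · exact List.mem_cons.2 (Or.inl (h ▸ hyv.symm))
          · have := hfwd _ (Or.inr ⟨y, hy2, hyv⟩)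
            rw [h] at this
            exact this
      · intro v hv
        rcases hbwd v hv with rfl | ⟨y, hy, hyv⟩
        · exact Or.inl h
        · exact Or.inr ⟨y, List.mem_cons_of_mem x hy, hyv⟩
      · calc chainTime 𝒢 u (t : ℕ∞) l'
            ≤ chainTime 𝒢 u (t' : ℕ∞) l' :=
              chainTime_mono 𝒢 l' u (by exact_mod_cast (by omega : t ≤ t'))
          _ = chainTime 𝒢 u' (t' : ℕ∞) l' := by rw [h]
          _ ≤ (arrival J' t' : ℕ∞) := hct
          _ = (arrival (x :: J') t : ℕ∞) := by rw [harr]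
    · have hndl' : l'.Nodup := (List.nodup_cons.1 hnd).2
      have hu'l' : u' ∉ l' := (List.nodup_cons.1 hnd).1
      refine ⟨u' :: l'.erase u, ?_, ?_, ?_, ?_⟩
      · refine List.nodup_cons.2 ⟨?_, List.nodup_cons.2
          ⟨fun hc => hu'l' (List.mem_of_mem_erase hc), hndl'.erase u⟩⟩
        simp only [List.mem_cons]
        push_neg
        exact ⟨fun hc => h hc.symm, hndl'.not_mem_erase⟩
      · intro v hv
        rcases hv with rfl | ⟨y, hy, hyv⟩
        · exact List.mem_cons_self
        · rcases List.mem_cons.1 hy with rfl | hy2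
          · exact List.mem_cons.2 (Or.inr (List.mem_cons.2 (Or.inl hyv.symm)))
          · rcases List.mem_cons.1 (hfwd _ (Or.inr ⟨y, hy2, hyv⟩)) with h1 | h1
            · exact List.mem_cons.2 (Or.inr (List.mem_cons.2 (Or.inl h1)))
            · by_cases hvu : v = u
              · exact List.mem_cons.2 (Or.inl hvu)
              · exact List.mem_cons.2 (Or.inr (List.mem_cons.2
                  (Or.inr ((List.mem_erase_of_ne hvu).2 h1))))
      · intro v hv
        rcases List.mem_cons.1 hv with rfl | hv2
        · exact Or.inr ⟨x, List.mem_cons_self, rfl⟩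
        · rcases hbwd v (List.mem_of_mem_erase hv2) with rfl | ⟨y, hy, hyv⟩
          · exact Or.inr ⟨x, List.mem_cons_self, rfl⟩
          · exact Or.inr ⟨y, List.mem_cons_of_mem x hy, hyv⟩
      · rw [chainTime_cons]
        calc chainTime 𝒢 u' (stepTime 𝒢 u u' (t : ℕ∞)) (l'.erase u)
            ≤ chainTime 𝒢 u' (stepTime 𝒢 u u' (t : ℕ∞)) l' :=
              chainTime_sublist 𝒢 (l'.erase_sublist (a := u)) u' _
          _ ≤ chainTime 𝒢 u' (t' : ℕ∞) l' := chainTime_mono 𝒢 l' u' hstep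
          _ ≤ (arrival J' t' : ℕ∞) := hct
          _ = (arrival (x :: J') t : ℕ∞) := by rw [harr]

end MainLemmas

/-- If some covering journey from `s` at time `0` exists, the minimal
arrival time of a covering journey equals the minimum over all orderings
`u_1 = s, u_2, …, u_n` of `V` of `a_n`, where `a_1 = 0` and
`a_{i+1} = a_i + d^{a_i}_{u_i u_{i+1}}`. -/
theorem dmvp_eq_min_over_orderings {V : Type} [Fintype V] (𝒢 : TVG V) (s : V)
    (hex : ∃ J, 𝒢.IsCoveringFrom J s) :
    sInf {x : ℕ∞ | ∃ J, 𝒢.IsCoveringFrom J s ∧ x = (arrival J 0 : ℕ∞)} =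
    sInf {x : ℕ∞ | ∃ l : List V, (s :: l).Nodup ∧ (∀ v : V, v ∈ s :: l) ∧
      x = chainTime 𝒢 s 0 l} := by
  apply le_antisymm
  · apply le_sInf
    rintro x ⟨l, hnd, hcov, rfl⟩
    rcases eq_or_ne (chainTime 𝒢 s 0 l) ⊤ with htop | htop
    · rw [htop]; exact le_top
    obtain ⟨b, hb⟩ := enat_exists htop
    have h0 : chainTime 𝒢 s ((0 : ℕ) : ℕ∞) l ≤ (b : ℕ∞) := by
      rw [Nat.cast_zero, hb]
    obtain ⟨J, hJ, hsJ, hdJ, hvis, har⟩ := chain_exists_journey 𝒢 l s 0 b h0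
    have hcovJ : 𝒢.IsCoveringFrom J s := by
      refine ⟨hJ, hsJ, ?_⟩
      intro v
      rcases List.mem_cons.1 (hcov v) with rfl | hv
      · exact Or.inl rfl
      · exact hvis v hv
    refine le_trans (sInf_le ⟨J, hcovJ, rfl⟩) ?_
    rw [← hb]
    exact_mod_cast har
  · apply le_sInf
    rintro x ⟨J, hcovJ, rfl⟩
    obtain ⟨l, hnd, hfwd, hbwd, hct⟩ := journey_exists_chain 𝒢 J s 0 hcovJ.1 hcovJ.2.1
      (fun y _ => Nat.zero_le _)
    have hmem : chainTime 𝒢 s 0 l ∈ {x : ℕ∞ | ∃ l : List V, (s :: l).Nodup ∧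
        (∀ v : V, v ∈ s :: l) ∧ x = chainTime 𝒢 s 0 l} :=
      ⟨l, hnd, fun v => hfwd v (hcovJ.2.2 v), rfl⟩
    refine le_trans (sInf_le hmem) ?_
    rw [show (0 : ℕ∞) = ((0 : ℕ) : ℕ∞) from rfl]
    exact hct
end

section
/- Let 𝒢 be a TVG in class B with bound Δ whose underlying graph is a tree T on vertex set V, let s ∈ V, and let L* be the minimal length of a walk in T starting at s that visits every vertex of T. Then the minimal arrival time OPT of a covering journey from s at time 0 satisfies L* ≤ OPT ≤ Δ·L*. -/
open TVG

lemma elim_getLast?_indep {α β : Type*} : ∀ (z : α) (l : List α) (a b : β) (f : α → β),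
    ((z :: l).getLast?).elim a f = ((z :: l).getLast?).elim b f
  | _, [], _, _, _ => rfl
  | z, w :: l', a, b, f => by
    rw [List.getLast?_cons_cons]
    exact elim_getLast?_indep w l' a b f

lemma head_add_length_le {V : Type} : ∀ (J : List (TVG.Step V)), J.Chain' TVG.Linked →
    ∀ y ∈ J.head?, y.2.2 + J.length ≤ TVG.arrival J 0
  | [], _, y, hy => by simp at hy
  | [x], _, y, hy => by
    simp only [List.head?_cons, Option.mem_def, Option.some.injEq] at hy
    subst hy
    simp [TVG.arrival]
  | x :: z :: l, hc, y, hy => by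
    simp only [List.head?_cons, Option.mem_def, Option.some.injEq] at hy
    subst hy
    rcases List.isChain_cons_cons.mp hc with ⟨hxz, hc'⟩
    have ih := head_add_length_le (z :: l) hc' z (by simp)
    have harr : TVG.arrival (x :: z :: l) 0 = TVG.arrival (z :: l) 0 := by
      simp [TVG.arrival, List.getLast?_cons_cons]
    rw [harr]
    have := hxz.2
    simp only [List.length_cons] at ih ⊢
    omega

lemma walk_of_journey {V : Type} (𝒢 : TVG V) :
    ∀ (J : List (Step V)) (s : V), (∀ x ∈ J, 𝒢.G.Adj x.1 x.2.1) → startsAt J s →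
    J.Chain' Linked → ∃ (w : V) (W : 𝒢.G.Walk s w),
      W.support = s :: J.map (fun x => x.2.1) ∧ W.length = J.length
  | [], s, _, _, _ => ⟨s, SimpleGraph.Walk.nil, by simp, by simp⟩
  | x :: J', s, hadj, hst, hc => by
    have hxs : x.1 = s := hst x (by simp)
    have hst' : startsAt J' x.2.1 := by
      intro y hy
      rcases J' with _ | ⟨z, l⟩
      · simp at hy
      · simp only [List.head?_cons, Option.mem_def, Option.some.injEq] at hy
        subst hy
        exact (List.isChain_cons_cons.mp hc).1.1
    obtain ⟨w, W, hsup, hlen⟩ := walk_of_journey 𝒢 J' x.2.1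
      (fun y hy => hadj y (List.mem_cons_of_mem _ hy)) hst' (List.isChain_cons.mp hc).2
    have hadjx : 𝒢.G.Adj s x.2.1 := hxs ▸ hadj x (by simp)
    exact ⟨w, SimpleGraph.Walk.cons hadjx W, by simp [hsup], by simp [hlen]⟩

lemma journey_of_walk {V : Type} (𝒢 : TVG V) (Δ : ℕ) (hB : 𝒢.ClassB Δ) :
    ∀ {u w : V} (W : 𝒢.G.Walk u w) (t : ℕ), ∃ J : List (Step V), 𝒢.IsJourney J ∧
      startsAt J u ∧ departsAfter J t ∧ (∀ v ∈ W.support, visits J u v) ∧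
      arrival J t ≤ t + Δ * W.length := by
  intro u w W
  induction W with
  | nil =>
    intro t
    refine ⟨[], ⟨by simp, by exact List.IsChain.nil⟩, by simp [startsAt], by simp [departsAfter], ?_, ?_⟩
    · intro v hv
      simp only [SimpleGraph.Walk.support_nil, List.mem_singleton] at hv
      exact Or.inl hv
    · simp [arrival]
  | @cons u x w h W' ih =>
    intro t
    obtain ⟨t', ht1, ht2, havail⟩ := hB.2 u x h t
    obtain ⟨J', hJ', hst', hdep', hvis', harr'⟩ := ih (t' + 1)
    refine ⟨(u, x, t') :: J', ⟨?_, ?_⟩, ?_, ?_, ?_, ?_⟩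
    · intro y hy
      rcases List.mem_cons.mp hy with rfl | hy'
      · exact ⟨h, havail⟩
      · exact hJ'.1 y hy'
    · refine List.isChain_cons.mpr ⟨?_, hJ'.2⟩
      intro y hy
      exact ⟨hst' y hy, hdep' y hy⟩
    · intro y hy
      simp only [List.head?_cons, Option.mem_def, Option.some.injEq] at hy
      subst hy; rfl
    · intro y hy
      simp only [List.head?_cons, Option.mem_def, Option.some.injEq] at hy
      subst hy; exact ht1
    · intro v hv
      simp only [SimpleGraph.Walk.support_cons, List.mem_cons] at hv
      rcases hv with hv | hv
      · exact Or.inl hv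
      · rcases hvis' v hv with hv' | ⟨y, hy, hy'⟩
        · exact Or.inr ⟨(u, x, t'), by simp, hv'.symm⟩
        · exact Or.inr ⟨y, List.mem_cons_of_mem _ hy, hy'⟩
    · rcases J' with _ | ⟨z, l⟩
      · simp only [arrival, List.getLast?_singleton, Option.elim]
        simp only [SimpleGraph.Walk.length_cons]
        have : Δ * (W'.length + 1) = Δ * W'.length + Δ := by ring
        omega
      · have harr : arrival ((u, x, t') :: z :: l) t = arrival (z :: l) (t' + 1) := by
          simp only [arrival, List.getLast?_cons_cons]
          exact elim_getLast?_indep z l t (t' + 1) _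
        rw [harr]
        simp only [SimpleGraph.Walk.length_cons]
        have : Δ * (W'.length + 1) = Δ * W'.length + Δ := by ring
        omega

/-- For a TVG of class `B` with bound `Δ` over a tree, if `L*` is the
minimal length of a covering walk of the tree from `s` and `OPT` is the minimal arrival
time of a covering journey from `s` at time `0`, then `L* ≤ OPT ≤ Δ·L*`. -/
theorem classB_tree_delta_approx {V : Type} (𝒢 : TVG V) (Δ : ℕ) (hB : 𝒢.ClassB Δ)
    (htree : 𝒢.G.IsTree) (s : V) (Lstar OPT : ℕ)
    (hL : IsLeast {L : ℕ | ∃ (w : V) (W : 𝒢.G.Walk s w),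
        (∀ v : V, v ∈ W.support) ∧ W.length = L} Lstar)
    (hOPT : IsLeast {t : ℕ | ∃ J, 𝒢.IsCoveringFrom J s ∧ arrival J 0 = t} OPT) :
    Lstar ≤ OPT ∧ OPT ≤ Δ * Lstar := by
  constructor
  · -- lower bound
    obtain ⟨J, ⟨⟨hadj, hchain⟩, hstart, hvis⟩, harr⟩ := hOPT.1
    obtain ⟨w, W, hsup, hlen⟩ := walk_of_journey 𝒢 J s (fun x hx => (hadj x hx).1) hstart hchain
    have h1 : Lstar ≤ W.length := by
      refine hL.2 ⟨w, W, ?_, rfl⟩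
      intro v
      rw [hsup]
      rcases hvis v with hv | ⟨x, hx, hx'⟩
      · exact hv ▸ List.mem_cons_self
      · exact List.mem_cons_of_mem _ (List.mem_map.mpr ⟨x, hx, hx'⟩)
    have h2 : J.length ≤ arrival J 0 := by
      rcases J with _ | ⟨y, l⟩
      · simp [arrival]
      · have := head_add_length_le (y :: l) hchain y (by simp)
        omega
    omega
  · -- upper bound
    obtain ⟨w, W, hsup, hlen⟩ := hL.1
    obtain ⟨J, hJ, hst, _, hvis, harr⟩ := journey_of_walk 𝒢 Δ hB W 0
    have hmem : arrival J 0 ∈ {t : ℕ | ∃ J, 𝒢.IsCoveringFrom J s ∧ arrival J 0 = t} :=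
      ⟨J, ⟨hJ, hst, fun v => hvis v (hsup v)⟩, rfl⟩
    have := hOPT.2 hmem
    rw [hlen] at harr
    omega
end

section
/- Let 𝒢 be a TVG in class P with period p, let u, v be vertices, and let d be the minimal temporal length of a journey from u to v over all departure times (the fastest cost from u to v). Then for every time t there exists a journey from u to v departing at or after t and arriving by time t + d + (p − 1). -/
open TVG

lemma avail_add_mul {V : Type} (𝒢 : TVG V) {p : ℕ}
    (hP : ∀ u v t, 𝒢.avail u v t ↔ 𝒢.avail u v (t + p)) (x y : V) (a k : ℕ) :
    𝒢.avail x y a ↔ 𝒢.avail x y (a + k * p) := by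
  induction k with
  | zero => simp
  | succ n ih =>
      have h1 : a + (n + 1) * p = a + n * p + p := by ring
      rw [h1, ih, hP]

lemma avail_modEq {V : Type} (𝒢 : TVG V) {p : ℕ}
    (hP : ∀ u v t, 𝒢.avail u v t ↔ 𝒢.avail u v (t + p)) (x y : V) {a b : ℕ}
    (h : a ≡ b [MOD p]) : 𝒢.avail x y a ↔ 𝒢.avail x y b := by
  rcases le_total a b with hab | hab
  · obtain ⟨k, hk⟩ := (Nat.modEq_iff_dvd' hab).mp h
    rw [Nat.mul_comm] at hk
    have hb : b = a + k * p := by omega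
    rw [hb]; exact avail_add_mul 𝒢 hP x y a k
  · obtain ⟨k, hk⟩ := (Nat.modEq_iff_dvd' hab).mp h.symm
    rw [Nat.mul_comm] at hk
    have ha : a = b + k * p := by omega
    rw [ha]; exact (avail_add_mul 𝒢 hP x y b k).symm

lemma chain_head_le {V : Type} : ∀ (a : Step V) (l : List (Step V)),
    List.Chain' Linked (a :: l) → ∀ x ∈ a :: l, a.2.2 ≤ x.2.2 := by
  intro a l
  induction l generalizing a with
  | nil =>
      intro _ x hx
      simp only [List.mem_singleton] at hx
      subst hx; exact le_refl _
  | cons b l ih =>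
      intro h x hx
      simp only [List.Chain', List.isChain_cons_cons] at h
      rcases List.mem_cons.mp hx with rfl | hx
      · exact le_refl _
      · have h1 := ih b h.2 x hx
        have h2 := h.1.2
        omega

lemma shift_chain {V : Type} (dep dep' : ℕ) :
    ∀ (l : List (Step V)), (∀ x ∈ l, dep ≤ x.2.2) → l.Chain' Linked →
      (l.map (fun x => (x.1, x.2.1, x.2.2 - dep + dep'))).Chain' Linked := by
  intro l
  induction l with
  | nil => intro _ _; exact List.isChain_nil
  | cons a l ih =>
      intro hmem hchain
      cases l with
      | nil => exact List.isChain_singleton _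
      | cons b l' =>
          simp only [List.Chain', List.isChain_cons_cons] at hchain
          simp only [List.map_cons]
          simp only [List.Chain', List.isChain_cons_cons]
          constructor
          · obtain ⟨h1, h2⟩ := hchain.1
            refine ⟨h1, ?_⟩
            have ha : dep ≤ a.2.2 := hmem a (by simp)
            have hb : dep ≤ b.2.2 := hmem b (by simp)
            simp only
            omega
          · have := ih (fun x hx => hmem x (List.mem_cons_of_mem a hx)) hchain.2
            simpa [List.Chain'] using this

/-- In a TVG of class `P` with period `p`, if `d` is the minimal
temporal length of a journey from `u` to `v` over all departure times (the fastest
cost), then for every time `t` there is a journey from `u` to `v` departing at or after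
`t` and arriving by time `t + d + (p - 1)`. -/
theorem classP_foremost_le_fastest_add_period {V : Type} (𝒢 : TVG V) (p : ℕ)
    (hp : 0 < p) (hP : 𝒢.ClassP p) (u v : V) (d : ℕ)
    (hd : IsLeast {δ : ℕ | ∃ J, 𝒢.IsJourney J ∧ startsAt J u ∧ endAt J u = v ∧
        arrival J (departure J 0) - departure J 0 = δ} d) :
    ∀ t : ℕ, ∃ J, 𝒢.IsJourney J ∧ startsAt J u ∧ endAt J u = v ∧
      departsAfter J t ∧ arrival J t ≤ t + d + (p - 1) := by
  intro t
  obtain ⟨J, hJ, hstart, hend, hlen⟩ := hd.1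
  cases J with
  | nil =>
      simp only [arrival, departure, List.head?_nil, List.getLast?_nil, Option.elim] at hlen
      refine ⟨[], ⟨by simp, List.isChain_nil⟩, ?_, ?_, ?_, ?_⟩
      · intro x hx; simp at hx
      · simpa [endAt] using hend
      · intro x hx; simp at hx
      · simp only [arrival, List.getLast?_nil, Option.elim]
        omega
  | cons a l =>
      set dep := a.2.2 with hdep
      -- the last step of the journey
      have hne : (a :: l) ≠ [] := by simp
      set g := (a :: l).getLast hne with hg
      have hglast : (a :: l).getLast? = some g := List.getLast?_eq_getLast hne
      have hgmem : g ∈ a :: l := List.getLast_mem hne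
      have hdepJ : departure (a :: l) 0 = dep := by
        simp [departure, List.head?_cons, hdep]
      have harrJ : arrival (a :: l) (departure (a :: l) 0) = g.2.2 + 1 := by
        simp [arrival, hglast]
      have hlb : ∀ x ∈ a :: l, dep ≤ x.2.2 := chain_head_le a l hJ.2
      have hgdep : dep ≤ g.2.2 := hlb g hgmem
      have hdval : g.2.2 + 1 - dep = d := by rw [harrJ, hdepJ] at hlen; exact hlen
      -- choose the shifted departure time
      set dep' := t + (dep + t * (p - 1)) % p with hdep'
      have htp : t + t * (p - 1) = t * p := by
        cases p with
        | zero => omega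
        | succ n =>
            simp only [Nat.succ_sub_one]
            ring
      have hmod : dep' ≡ dep [MOD p] := by
        have h1 : dep' ≡ t + (dep + t * (p - 1)) [MOD p] :=
          Nat.ModEq.add_left t (Nat.mod_modEq _ p)
        have h2 : t + (dep + t * (p - 1)) = dep + t * p := by omega
        rw [h2] at h1
        calc dep' ≡ dep + t * p [MOD p] := h1
          _ ≡ dep + 0 [MOD p] := Nat.ModEq.add_left dep (Nat.modEq_zero_iff_dvd.mpr ⟨t, mul_comm t p⟩)
          _ = dep := by omega
      have hdep'_lb : t ≤ dep' := by omega
      have hdep'_ub : dep' ≤ t + (p - 1) := by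
        have := Nat.mod_lt (dep + t * (p - 1)) hp
        omega
      -- the shifted journey
      set f : Step V → Step V := fun x => (x.1, x.2.1, x.2.2 - dep + dep') with hf
      refine ⟨(a :: l).map f, ⟨?_, ?_⟩, ?_, ?_, ?_, ?_⟩
      · intro x hx
        obtain ⟨y, hy, rfl⟩ := List.mem_map.mp hx
        refine ⟨(hJ.1 y hy).1, ?_⟩
        have hyd : dep ≤ y.2.2 := hlb y hy
        have hyeq : y.2.2 - dep + dep' ≡ y.2.2 - dep + dep [MOD p] :=
          Nat.ModEq.add_left _ hmod
        have : y.2.2 - dep + dep = y.2.2 := by omega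
        rw [this] at hyeq
        exact (avail_modEq 𝒢 hP.2 y.1 y.2.1 hyeq).mpr (hJ.1 y hy).2
      · exact shift_chain dep dep' (a :: l) hlb hJ.2
      · intro x hx
        simp only [List.map_cons, List.head?_cons, Option.mem_def, Option.some.injEq] at hx
        subst hx
        exact hstart a (by simp [List.head?_cons])
      · have : ((a :: l).map f).getLast? = some (f g) := by
          rw [List.getLast?_map, hglast]; rfl
        simp only [endAt, this, Option.elim]
        have := hend
        simp only [endAt, hglast, Option.elim] at this
        exact this
      · intro x hx
        simp only [List.map_cons, List.head?_cons, Option.mem_def, Option.some.injEq] at hx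
        subst hx
        simp only [hf]
        omega
      · have : ((a :: l).map f).getLast? = some (f g) := by
          rw [List.getLast?_map, hglast]; rfl
        simp only [arrival, this, Option.elim]; simp only [hf]
        omega
end
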